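/- Let μ > 0, 0 < ε < π/2, and for ξ' ∈ ℝ² \ {0}, λ ∈ Σ_ε = {λ ∈ ℂ \ {0} : |arg λ| < π − ε}, set A = |ξ'| and B = √(λ/μ + A²) with Re B ≥ 0. Then there exists a constant c = c(ε, μ) > 0 such that Re B ≥ c (|λ|^{1/2} + A) for all such λ and ξ'. -/

import Mathlib

/-- Key real inequality: if `x² + y² = r²`, `x ≥ -c₀ r`, `t ≥ 0`, `s ≥ 0` with
`s² = (x+t)² + y²`, then `s + (x+t) ≥ (1-c₀)/2 · (r+t)`. -/
lemma stmt_12_key (c₀ x y r t s : ℝ) (hc0 : 0 ≤ c₀) (hc1 : c₀ ≤ 1) (hr : 0 ≤ r)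
    (ht : 0 ≤ t) (hxy : x ^ 2 + y ^ 2 = r ^ 2) (hx : -(c₀ * r) ≤ x) (hs : 0 ≤ s)
    (hs2 : s ^ 2 = (x + t) ^ 2 + y ^ 2) :
    (1 - c₀) / 2 * (r + t) ≤ s + (x + t) := by
  have hxr : -r ≤ x := by nlinarith [sq_nonneg y, sq_nonneg (x + r)]
  have hsrt : r - t ≤ s := by
    rcases le_total r t with h | h
    · linarith
    · nlinarith [mul_nonneg ht (by linarith : (0:ℝ) ≤ x + r)]
  rcases le_total t r with h | h
  · nlinarith [mul_nonneg hc0 ht, mul_nonneg hc0 hr]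
  · nlinarith [mul_nonneg hc0 (by linarith : (0:ℝ) ≤ t - r)]

/-- Sector lower bound: for `λ` in the sector `Σ_ε = {|arg λ| < π - ε, λ ≠ 0}` and
`A = |ξ'| > 0`, the root `B = √(λ/μ + A²)` with `Re B ≥ 0` satisfies
`Re B ≥ c (|λ|^{1/2} + A)` for a constant `c = c(ε, μ) > 0`. -/
theorem stmt_12 (μ ε : ℝ) (hμ : 0 < μ) (hε0 : 0 < ε) (hε : ε < Real.pi / 2) :
    ∃ c : ℝ, 0 < c ∧
      ∀ ξ' : EuclideanSpace ℝ (Fin 2), ξ' ≠ 0 →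
        ∀ lam : ℂ, lam ≠ 0 → |Complex.arg lam| < Real.pi - ε →
          ∀ B : ℂ, B ^ 2 = lam / (μ : ℂ) + (‖ξ'‖ : ℂ) ^ 2 → 0 ≤ B.re →
            c * (Real.sqrt (‖lam‖) + ‖ξ'‖) ≤ B.re := by
  have hπ := Real.pi_pos
  set c₀ : ℝ := Real.cos ε with hc₀def
  have hc0 : 0 ≤ c₀ := Real.cos_nonneg_of_mem_Icc ⟨by linarith, le_of_lt hε⟩
  have hc1 : c₀ < 1 := by
    have := Real.cos_lt_cos_of_nonneg_of_le_pi (le_refl 0) (by linarith) hε0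
    simpa using this
  set m : ℝ := max μ 1 with hmdef
  have hm1 : 1 ≤ m := le_max_right _ _
  have hmμ : μ ≤ m := le_max_left _ _
  have hm0 : 0 < m := lt_of_lt_of_le one_pos hm1
  have hc1' : (0:ℝ) < 1 - c₀ := by linarith
  refine ⟨Real.sqrt ((1 - c₀) / (8 * m)), Real.sqrt_pos.2 (div_pos hc1' (by positivity)), ?_⟩
  intro ξ' hξ lam hlam harg B hB hBre
  set A : ℝ := ‖ξ'‖ with hAdef
  have hA : 0 < A := norm_pos_iff.2 hξ
  set x : ℝ := lam.re / μ with hxdef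
  set y : ℝ := lam.im / μ with hydef
  set r : ℝ := ‖lam‖ / μ with hrdef
  set t : ℝ := A ^ 2 with htdef
  have ht : 0 < t := by positivity
  have habs : 0 < ‖lam‖ := norm_pos_iff.mpr hlam
  have hr : 0 < r := by positivity
  -- x² + y² = r²
  have hxy : x ^ 2 + y ^ 2 = r ^ 2 := by
    have h1 : ‖lam‖ ^ 2 = lam.re ^ 2 + lam.im ^ 2 := by
      rw [Complex.sq_norm, Complex.normSq_apply]; ring
    rw [hxdef, hydef, hrdef]
    field_simp
    linarith
  -- sector condition: x ≥ -c₀ r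
  have hsec : -(c₀ * r) ≤ x := by
    have hcosarg : Real.cos (Complex.arg lam) = lam.re / ‖lam‖ :=
      Complex.cos_arg hlam
    have h1 : Real.cos (Real.pi - ε) ≤ Real.cos |Complex.arg lam| :=
      Real.cos_le_cos_of_nonneg_of_le_pi (abs_nonneg _) (by linarith) (le_of_lt harg)
    have h2 : Real.cos |Complex.arg lam| = Real.cos (Complex.arg lam) := by
      rcases abs_choice (Complex.arg lam) with h | h
      · rw [h]
      · rw [h, Real.cos_neg]
    rw [Real.cos_pi_sub, h2, hcosarg] at h1
    have h3 : -(c₀ * ‖lam‖) ≤ lam.re := by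
      have := mul_le_mul_of_nonneg_right h1 (le_of_lt habs)
      rw [div_mul_cancel₀ _ (ne_of_gt habs)] at this
      linarith
    have h4 := (div_le_div_iff_of_pos_right hμ).2 h3
    calc -(c₀ * r) = -(c₀ * ‖lam‖) / μ := by rw [hrdef]; ring
      _ ≤ lam.re / μ := h4
  set s : ℝ := ‖lam / (μ : ℂ) + (A : ℂ) ^ 2‖ with hsdef
  have hwre : (lam / (μ : ℂ) + (A : ℂ) ^ 2).re = x + t := by
    simp [Complex.add_re, ← Complex.ofReal_pow, Complex.div_ofReal_re, hxdef, htdef]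
  have hwim : (lam / (μ : ℂ) + (A : ℂ) ^ 2).im = y := by
    simp [Complex.add_im, ← Complex.ofReal_pow, Complex.div_ofReal_im, hydef]
  have hs2 : s ^ 2 = (x + t) ^ 2 + y ^ 2 := by
    rw [hsdef, Complex.sq_norm, Complex.normSq_apply, hwre, hwim]; ring
  have hBre2 : 2 * B.re ^ 2 = s + (x + t) := by
    have h1 : (B ^ 2).re = B.re ^ 2 - B.im ^ 2 := by rw [pow_two, Complex.mul_re]; ring
    have h2 : ‖B ^ 2‖ = B.re ^ 2 + B.im ^ 2 := by
      rw [norm_pow, Complex.sq_norm, Complex.normSq_apply]; ring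
    rw [hB] at h1 h2
    rw [hwre] at h1
    rw [← hsdef] at h2
    linarith
  have key := stmt_12_key c₀ x y r t s hc0 hc1.le hr.le ht.le hxy hsec
    (norm_nonneg _) hs2
  -- numeric assembly
  have hsq : Real.sqrt (‖lam‖) ^ 2 = ‖lam‖ := Real.sq_sqrt habs.le
  have hrlam : ‖lam‖ = r * μ := by rw [hrdef]; field_simp
  have h5 : (Real.sqrt (‖lam‖) + A) ^ 2 ≤ 2 * m * (r + t) := by
    nlinarith [sq_nonneg (Real.sqrt (‖lam‖) - A),
      mul_nonneg (sub_nonneg.2 hmμ) hr.le, mul_nonneg (sub_nonneg.2 hm1) ht.le]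
  have hc2 : Real.sqrt ((1 - c₀) / (8 * m)) ^ 2 = (1 - c₀) / (8 * m) :=
    Real.sq_sqrt (le_of_lt (div_pos hc1' (by positivity)))
  have hKnn : 0 ≤ Real.sqrt (‖lam‖) + A := by positivity
  have hmain : (Real.sqrt ((1 - c₀) / (8 * m)) * (Real.sqrt (‖lam‖) + A)) ^ 2
      ≤ B.re ^ 2 := by
    rw [mul_pow, hc2]
    have h6 : (1 - c₀) / (8 * m) * (Real.sqrt (‖lam‖) + A) ^ 2
        ≤ (1 - c₀) / (8 * m) * (2 * m * (r + t)) :=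
      mul_le_mul_of_nonneg_left h5 (le_of_lt (div_pos hc1' (by positivity)))
    have h7 : (1 - c₀) / (8 * m) * (2 * m * (r + t)) = (1 - c₀) / 4 * (r + t) := by
      field_simp
      ring
    linarith
  have := Real.sqrt_le_sqrt hmain
  rwa [Real.sqrt_sq (mul_nonneg (Real.sqrt_nonneg _) hKnn), Real.sqrt_sq hBre] at this
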